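/- The monitor synthesised from a server specification is rejection sound: for all servers p and q, if rej(q, ⟦p⟧) then p ⋢ q, where ⟦·⟧ is the synthesis defined by ⟦nil⟧ = end, ⟦α.p⟧ = ¬α.no + α.⟦p⟧, ⟦p+q⟧ = ⟦p⟧ × ⟦q⟧, ⟦p⊕q⟧ = ⟦p⟧ × ⟦q⟧. -/

import Mathlib

/-- Actions: names and co-names. -/
inductive Act : Type where
  | pos : Nat → Act
  | neg : Nat → Act
deriving DecidableEq

/-- Complementation (dual) of actions. -/
def Act.dual : Act → Act
  | .pos n => .neg n
  | .neg n => .pos n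

/-- Server contracts. -/
inductive Srv : Type where
  | nil : Srv
  | pre : Act → Srv → Srv
  | ext : Srv → Srv → Srv
  | int : Srv → Srv → Srv
deriving DecidableEq

/-- Client contracts (additionally with success `ok`). -/
inductive Cli : Type where
  | nil : Cli
  | ok : Cli
  | pre : Act → Cli → Cli
  | ext : Cli → Cli → Cli
  | int : Cli → Cli → Cli
deriving DecidableEq

/-- Server LTS; label `none` is the silent action τ. -/
inductive SStep : Srv → Option Act → Srv → Prop where
  | pre : ∀ (a : Act) (p : Srv), SStep (.pre a p) (some a) p
  | extL : ∀ {p ℓ p'} (q : Srv), SStep p ℓ p' → SStep (.ext p q) ℓ p'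
  | extR : ∀ {q ℓ q'} (p : Srv), SStep q ℓ q' → SStep (.ext p q) ℓ q'
  | intL : ∀ (p q : Srv), SStep (.int p q) none p
  | intR : ∀ (p q : Srv), SStep (.int p q) none q

/-- Client LTS; label `none` is τ.  `ok` and `nil` have no transitions. -/
inductive CStep : Cli → Option Act → Cli → Prop where
  | pre : ∀ (a : Act) (r : Cli), CStep (.pre a r) (some a) r
  | extL : ∀ {r ℓ r'} (s : Cli), CStep r ℓ r' → CStep (.ext r s) ℓ r'
  | extR : ∀ {s ℓ s'} (r : Cli), CStep s ℓ s' → CStep (.ext r s) ℓ s'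
  | intL : ∀ (r s : Cli), CStep (.int r s) none r
  | intR : ∀ (r s : Cli), CStep (.int r s) none s

/-- System τ-transitions for a client-server system `r ∥ p`. -/
inductive SysStep : Cli × Srv → Cli × Srv → Prop where
  | srv : ∀ {p p'} (r : Cli), SStep p none p' → SysStep (r, p) (r, p')
  | cli : ∀ {r r'} (p : Srv), CStep r none r' → SysStep (r, p) (r', p)
  | syn : ∀ {r r' p p' a}, CStep r (some (Act.dual a)) r' → SStep p (some a) p' →
      SysStep (r, p) (r', p')

/-- `Sat p r`: every maximal computation from `r ∥ p` is successful. -/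
def Sat (p : Srv) (r : Cli) : Prop :=
  ∀ s q, Relation.ReflTransGen SysStep (r, p) (s, q) →
    (¬ ∃ x, SysStep (s, q) x) → s = Cli.ok

/-- The server (subcontract) preorder. -/
def SrvPre (p q : Srv) : Prop := ∀ r, Sat p r → Sat q r

/-- Monitor verdicts: acceptance, rejection, inconclusive. -/
inductive Verd : Type where
  | yes : Verd
  | no : Verd
  | stp : Verd
deriving DecidableEq

/-- Monitors. -/
inductive Mon : Type where
  | verd : Verd → Mon
  | act : Act → Mon → Mon
  | nact : Act → Mon → Mon
  | choice : Mon → Mon → Mon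
  | conj : Mon → Mon → Mon
deriving DecidableEq

/-- Monitor LTS (on visible actions only); verdicts persist. -/
inductive MStep : Mon → Act → Mon → Prop where
  | verd : ∀ (v : Verd) (a : Act), MStep (.verd v) a (.verd v)
  | act : ∀ (a : Act) (m : Mon), MStep (.act a m) a m
  | nact : ∀ {b a : Act} (m : Mon), b ≠ a → MStep (.nact a m) b m
  | chL : ∀ {m a m'} (n : Mon), MStep m a m' → MStep (.choice m n) a m'
  | chR : ∀ {n a n'} (m : Mon), MStep n a n' → MStep (.choice m n) a n'
  | conj : ∀ {m a m' n n'}, MStep m a m' → MStep n a n' →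
      MStep (.conj m n) a (.conj m' n')

/-- Instrumentation of a monitor over a server: `m ◁ p`. -/
inductive IStep : Mon × Srv → Option Act → Mon × Srv → Prop where
  | mon : ∀ {m p a m' p'}, SStep p (some a) p' → MStep m a m' →
      IStep (m, p) (some a) (m', p')
  | ter : ∀ {m p a p'}, SStep p (some a) p' → (¬ ∃ m', MStep m a m') →
      IStep (m, p) (some a) (.verd .stp, p')
  | asy : ∀ {p p'} (m : Mon), SStep p none p' → IStep (m, p) none (m, p')

/-- Reachability along monitored computations. -/
def IReach : Mon × Srv → Mon × Srv → Prop :=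
  Relation.ReflTransGen (fun x y => ∃ ℓ, IStep x ℓ y)

/-- Rejecting monitor states: conjunctions `no × ⋯ × no` (incl. the single `no`). -/
inductive IsRej : Mon → Prop where
  | no : IsRej (.verd .no)
  | conj : ∀ {m n}, IsRej m → IsRej n → IsRej (.conj m n)

/-- `Rej p m`: some monitored computation from `m ◁ p` reaches a rejecting state. -/
def Rej (p : Srv) (m : Mon) : Prop :=
  ∃ m' p', IReach (m, p) (m', p') ∧ IsRej m'

/-- Monitor synthesis from a server specification. -/
def synth : Srv → Mon
  | .nil => .verd .stp
  | .pre a p => .choice (.nact a (.verd .no)) (.act a (synth p))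
  | .ext p q => .conj (synth p) (synth q)
  | .int p q => .conj (synth p) (synth q)

/-- Traces (finite sequences of visible actions) of a server. -/
inductive STrace : Srv → List Act → Prop where
  | nil : ∀ (p : Srv), STrace p []
  | tau : ∀ {p p' t}, SStep p none p' → STrace p' t → STrace p t
  | act : ∀ {p a p' t}, SStep p (some a) p' → STrace p' t → STrace p (a :: t)

/-- Traces of a monitored system. -/
inductive ITrace : Mon × Srv → List Act → Prop where
  | nil : ∀ (x : Mon × Srv), ITrace x []
  | tau : ∀ {x y t}, IStep x none y → ITrace y t → ITrace x t
  | act : ∀ {x a y t}, IStep x (some a) y → ITrace y t → ITrace x (a :: t)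

/-- Weak visible transition: τ-steps followed by a visible action. -/
def WAct (p : Srv) (a : Act) (p' : Srv) : Prop :=
  ∃ p₀, Relation.ReflTransGen (fun x y => SStep x none y) p p₀ ∧ SStep p₀ (some a) p'

/-! ### Auxiliary development -/

namespace SynthSound

/-- Monitor action sequences with endpoint. -/
inductive MSeq : Mon → List Act → Mon → Prop where
  | nil : ∀ (m : Mon), MSeq m [] m
  | cons : ∀ {m a m₁ t m'}, MStep m a m₁ → MSeq m₁ t m' → MSeq m (a :: t) m'

/-- Server traces with endpoint. -/
inductive STr : Srv → List Act → Srv → Prop where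
  | nil : ∀ (p : Srv), STr p [] p
  | tau : ∀ {p p' t p''}, SStep p none p' → STr p' t p'' → STr p t p''
  | act : ∀ {p a p' t p''}, SStep p (some a) p' → STr p' t p'' → STr p (a :: t) p''

/-- The "rejected traces" of a server specification. -/
inductive Rj : Srv → List Act → Prop where
  | wrong : ∀ {a : Act} {p : Srv} {b : Act} {t : List Act}, b ≠ a → Rj (.pre a p) (b :: t)
  | step : ∀ {a : Act} {p : Srv} {t : List Act}, Rj p t → Rj (.pre a p) (a :: t)
  | ext : ∀ {p q t}, Rj p t → Rj q t → Rj (.ext p q) t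
  | int : ∀ {p q t}, Rj p t → Rj q t → Rj (.int p q) t

lemma stp_reach : ∀ {x y : Mon × Srv}, IReach x y → x.1 = .verd .stp → y.1 = .verd .stp := by
  intro x y h
  induction h using Relation.ReflTransGen.head_induction_on with
  | refl => exact fun h => h
  | head hstep _ ih =>
    intro hx
    obtain ⟨ℓ, hi⟩ := hstep
    cases hi with
    | mon hs hm =>
      apply ih
      simp only [] at hx
      subst hx
      cases hm; rfl
    | ter hs hnm =>
      simp only [] at hx
      subst hx
      exact absurd ⟨_, MStep.verd _ _⟩ hnm
    | asy m hs => exact ih hx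

lemma decompose' : ∀ {x y : Mon × Srv}, IReach x y → IsRej y.1 →
    ∃ t, MSeq x.1 t y.1 ∧ STr x.2 t y.2 := by
  intro x y h
  induction h using Relation.ReflTransGen.head_induction_on with
  | refl => exact fun _ => ⟨[], MSeq.nil _, STr.nil _⟩
  | head hstep hrest ih =>
    intro hrej
    obtain ⟨ℓ, hi⟩ := hstep
    cases hi with
    | mon hs hm =>
      obtain ⟨t, h1, h2⟩ := ih hrej
      exact ⟨_ :: t, MSeq.cons hm h1, STr.act hs h2⟩
    | ter hs hnm =>
      have := stp_reach hrest rfl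
      rw [this] at hrej
      cases hrej
    | asy m hs =>
      obtain ⟨t, h1, h2⟩ := ih hrej
      exact ⟨t, h1, STr.tau hs h2⟩

lemma mseq_verd : ∀ {m t m'}, MSeq m t m' → ∀ v, m = .verd v → m' = .verd v := by
  intro m t m' h
  induction h with
  | nil => exact fun v hv => hv
  | cons hst _ ih =>
    intro v hv
    subst hv
    cases hst
    exact ih v rfl

lemma mseq_conj : ∀ {m t m'}, MSeq m t m' → ∀ m₁ m₂, m = .conj m₁ m₂ →
    ∃ n₁ n₂, m' = .conj n₁ n₂ ∧ MSeq m₁ t n₁ ∧ MSeq m₂ t n₂ := by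
  intro m t m' h
  induction h with
  | nil => exact fun m₁ m₂ hm => ⟨m₁, m₂, hm, MSeq.nil _, MSeq.nil _⟩
  | cons hst _ ih =>
    intro m₁ m₂ hm
    subst hm
    cases hst with
    | conj h1 h2 =>
      obtain ⟨n₁, n₂, he, hs1, hs2⟩ := ih _ _ rfl
      exact ⟨n₁, n₂, he, MSeq.cons h1 hs1, MSeq.cons h2 hs2⟩

lemma mseq_rej : ∀ (p : Srv) {t m'}, MSeq (synth p) t m' → IsRej m' → Rj p t := by
  intro p
  induction p with
  | nil =>
    intro t m' h hrej
    have := mseq_verd h _ rfl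
    subst this; cases hrej
  | pre a p ih =>
    intro t m' h hrej
    cases h with
    | nil => cases hrej
    | cons hst hrest =>
      cases hst with
      | chL _ h1 =>
        cases h1 with
        | nact _ hne =>
          exact Rj.wrong hne
      | chR _ h1 =>
        cases h1
        exact Rj.step (ih hrest hrej)
  | ext p q ihp ihq =>
    intro t m' h hrej
    obtain ⟨n₁, n₂, he, hs1, hs2⟩ := mseq_conj h _ _ rfl
    subst he
    cases hrej with
    | conj r1 r2 => exact Rj.ext (ihp hs1 r1) (ihq hs2 r2)
  | int p q ihp ihq =>
    intro t m' h hrej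
    obtain ⟨n₁, n₂, he, hs1, hs2⟩ := mseq_conj h _ _ rfl
    subst he
    cases hrej with
    | conj r1 r2 => exact Rj.int (ihp hs1 r1) (ihq hs2 r2)

lemma rj_ne_nil : ∀ {p t}, Rj p t → t ≠ [] := by
  intro p t h
  induction h <;> simp_all

lemma rj_tau : ∀ {p t p'}, Rj p t → SStep p none p' → Rj p' t := by
  intro p t p' h
  induction h generalizing p' with
  | wrong hne => intro hs; cases hs
  | step _ _ => intro hs; cases hs
  | ext h1 h2 ih1 ih2 =>
    intro hs
    cases hs with
    | extL _ hs' => exact ih1 hs'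
    | extR _ hs' => exact ih2 hs'
  | int h1 h2 ih1 ih2 =>
    intro hs
    cases hs with
    | intL => exact h1
    | intR => exact h2

lemma rj_act : ∀ {p a t p'}, Rj p (a :: t) → SStep p (some a) p' → Rj p' t := by
  intro p a t p' h
  generalize ht : (a :: t) = u at h
  induction h generalizing a t p' with
  | wrong hne =>
    intro hs
    cases hs
    cases ht
    exact absurd rfl hne
  | step hr _ =>
    intro hs
    cases hs
    cases ht
    exact hr
  | ext h1 h2 ih1 ih2 =>
    intro hs
    cases hs with
    | extL _ hs' => exact ih1 ht hs'
    | extR _ hs' => exact ih2 ht hs'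
  | int _ _ _ _ => intro hs; cases hs

lemma dual_dual (a : Act) : Act.dual (Act.dual a) = a := by cases a <;> rfl

lemma dual_inj : ∀ {a b : Act}, Act.dual a = Act.dual b → a = b := by
  intro a b h
  have := congrArg Act.dual h
  rwa [dual_dual, dual_dual] at this

/-- The distinguishing client for a trace. -/
def Cl : List Act → Cli
  | [] => .nil
  | a :: t => .ext (.pre a.dual (Cl t)) (.int .ok .ok)

lemma cstep_pre_inv : ∀ {c r ℓ r'}, CStep (.pre c r) ℓ r' → ℓ = some c ∧ r' = r := by
  intro c r ℓ r' h
  cases h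
  exact ⟨rfl, rfl⟩

/-- Invariant for `Sat p (Cl t)`. -/
def GInv (x : Cli × Srv) : Prop :=
  (∃ s p', x = (Cl s, p') ∧ Rj p' s) ∨ x.1 = .ok

lemma ginv_step : ∀ {x y}, GInv x → SysStep x y → GInv y := by
  rintro ⟨c, pp⟩ y hinv hstep
  rcases hinv with ⟨s, p', hx, hrj⟩ | hok
  · injection hx with h1 h2
    subst h1; subst h2
    obtain ⟨a, s', rfl⟩ : ∃ a s', s = a :: s' := by
      cases s with
      | nil => exact absurd rfl (rj_ne_nil hrj)
      | cons a s' => exact ⟨a, s', rfl⟩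
    cases hstep with
    | srv r hs => exact Or.inl ⟨_, _, rfl, rj_tau hrj hs⟩
    | cli p hc =>
      cases hc with
      | extL _ h1 => cases h1
      | extR _ h1 => cases h1 <;> exact Or.inr rfl
    | syn hc hs =>
      cases hc with
      | extL _ h1 =>
        obtain ⟨hl, hr⟩ := cstep_pre_inv h1
        have hb := dual_inj (Option.some.inj hl)
        subst hb
        subst hr
        exact Or.inl ⟨_, _, rfl, rj_act hrj hs⟩
      | extR _ h1 => cases h1
  · simp only [] at hok
    subst hok
    cases hstep with
    | srv r hs => exact Or.inr rfl
    | cli p hc => cases hc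
    | syn hc hs => cases hc

lemma ginv_reach : ∀ {x y}, Relation.ReflTransGen SysStep x y → GInv x → GInv y := by
  intro x y h
  induction h with
  | refl => exact id
  | tail _ hstep ih => exact fun hx => ginv_step (ih hx) hstep

lemma cl_can_step : ∀ {s p}, s ≠ [] → ∃ y, SysStep (Cl s, p) y := by
  intro s p hs
  cases s with
  | nil => exact absurd rfl hs
  | cons a s' =>
    exact ⟨(.ok, p), SysStep.cli _ (CStep.extR _ (CStep.intL _ _))⟩

lemma sat_of_rj : ∀ {p t}, Rj p t → Sat p (Cl t) := by
  intro p t hrj s q hreach hstuck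
  have hinv : GInv (s, q) := ginv_reach hreach (Or.inl ⟨t, p, rfl, hrj⟩)
  rcases hinv with ⟨s', p', hx, hrj'⟩ | hok
  · exfalso
    apply hstuck
    obtain ⟨h1, h2⟩ := Prod.mk.injEq .. ▸ hx
    subst h1; subst h2
    exact cl_can_step (rj_ne_nil hrj')
  · exact hok

lemma follow : ∀ {q t q'}, STr q t q' →
    Relation.ReflTransGen SysStep (Cl t, q) (Cli.nil, q') := by
  intro q t q' h
  induction h with
  | nil => exact Relation.ReflTransGen.refl
  | tau hs _ ih => exact Relation.ReflTransGen.head (SysStep.srv _ hs) ih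
  | act hs _ ih =>
    refine Relation.ReflTransGen.head ?_ ih
    exact SysStep.syn (CStep.extL _ (CStep.pre _ _)) hs

def ssize : Srv → Nat
  | .nil => 1
  | .pre _ p => ssize p + 1
  | .ext p q => ssize p + ssize q + 1
  | .int p q => ssize p + ssize q + 1

lemma sstep_size : ∀ {p ℓ p'}, SStep p ℓ p' → ssize p' < ssize p := by
  intro p ℓ p' h
  induction h with
  | pre a p => simp [ssize]
  | extL q _ ih => simp only [ssize]; omega
  | extR p _ ih => simp only [ssize]; omega
  | intL p q => simp [ssize]
  | intR p q => simp [ssize]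

lemma tau_normalize' : ∀ (n : Nat) (p : Srv), ssize p ≤ n →
    ∃ p', Relation.ReflTransGen (fun x y => SStep x none y) p p'
    ∧ ¬ ∃ p'', SStep p' none p'' := by
  intro n
  induction n with
  | zero => intro p hp; cases p <;> simp [ssize] at hp
  | succ n ih =>
    intro p hp
    by_cases h : ∃ p₁, SStep p none p₁
    · obtain ⟨p₁, h1⟩ := h
      obtain ⟨p', h2, h3⟩ := ih p₁ (by have := sstep_size h1; omega)
      exact ⟨p', Relation.ReflTransGen.head h1 h2, h3⟩
    · exact ⟨p, Relation.ReflTransGen.refl, h⟩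

lemma nil_tau_lift : ∀ {q q' : Srv}, Relation.ReflTransGen (fun x y => SStep x none y) q q' →
    Relation.ReflTransGen SysStep (Cli.nil, q) (Cli.nil, q') := by
  intro q q' h
  induction h with
  | refl => exact Relation.ReflTransGen.refl
  | tail _ hs ih => exact Relation.ReflTransGen.tail ih (SysStep.srv _ hs)

lemma nil_stuck : ∀ {q : Srv}, (¬ ∃ q', SStep q none q') → ¬ ∃ y, SysStep (Cli.nil, q) y := by
  rintro q hq ⟨y, hy⟩
  cases hy with
  | srv r hs => exact hq ⟨_, hs⟩
  | cli p hc => cases hc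
  | syn hc hs => cases hc

lemma not_sat : ∀ {q t q'}, STr q t q' → ¬ Sat q (Cl t) := by
  intro q t q' htr hsat
  obtain ⟨qf, hq1, hq2⟩ := tau_normalize' (ssize q') q' le_rfl
  have hreach : Relation.ReflTransGen SysStep (Cl t, q) (Cli.nil, qf) :=
    (follow htr).trans (nil_tau_lift hq1)
  have := hsat Cli.nil qf hreach (nil_stuck hq2)
  cases this

end SynthSound

/-- Synthesis soundness: whenever `rej(q, ⟦p⟧)` then `p ⋢ q`. -/
theorem synthesis_sound (p q : Srv) : Rej q (synth p) → ¬ SrvPre p q := by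
  rintro ⟨m', q', hreach, hrej⟩ hpre
  obtain ⟨t, hms, htr⟩ := SynthSound.decompose' hreach hrej
  have hrj : SynthSound.Rj p t := SynthSound.mseq_rej p hms hrej
  have hsat : Sat p (SynthSound.Cl t) := SynthSound.sat_of_rj hrj
  exact SynthSound.not_sat htr (hpre _ hsat)
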